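/- For every \alpha \in [0,1), the function g_\alpha attains its global maximum on [0,1] at a unique point x_0 \in (0,1/2], and x_0 is the unique solution in (0,1/2] of the equation G_\alpha(x_0) = x_0 + 1/2. Moreover, if \alpha > 0 then x_0 is the only critical point of g_\alpha in the open interval (0,1). -/

import Mathlib

/-- `g α x` : the expected density after the epidemic stage on a percolated 3-tree. -/
noncomputable def g (α x : ℝ) : ℝ :=
  if x = 0 then 0
  else (1 - Real.sqrt (1 - 4 * (1 - α) * x * (1 - x))) ^ 3 / (8 * (1 - α) ^ 2 * x ^ 2)

/-- `G α x` : factor in the decomposition `g α x = (1-α) * x * (G α x)^3`. -/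
noncomputable def G (α x : ℝ) : ℝ :=
  if x = 0 then 1
  else (1 - Real.sqrt (1 - 4 * (1 - α) * x * (1 - x))) / (2 * (1 - α) * x)

lemma stmt3_D_pos {α y : ℝ} (h0 : 0 < α) (hy0 : 0 ≤ y) (hy1 : y ≤ 1) :
    0 < 1 - 4 * (1 - α) * y * (1 - y) := by
  nlinarith [sq_nonneg (1 - 2*y), mul_nonneg (mul_nonneg h0.le hy0) (by linarith : (0:ℝ) ≤ 1 - y)]

lemma stmt3_hasDerivAt_g {α y : ℝ} (h0 : 0 < α) (h1 : α < 1) (hy : y ∈ Set.Ioo (0:ℝ) 1) :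
    HasDerivAt (g α)
      ((1 - Real.sqrt (1 - 4 * (1 - α) * y * (1 - y))) ^ 2 *
        ((1 - (1-α)*y - 2*(1-α)*y^2) - Real.sqrt (1 - 4 * (1 - α) * y * (1 - y))) /
        (4 * (1-α)^2 * y^3 * Real.sqrt (1 - 4 * (1 - α) * y * (1 - y)))) y := by
  obtain ⟨hy0, hy1⟩ := hy
  set s := Real.sqrt (1 - 4 * (1 - α) * y * (1 - y)) with hs_def
  have hD : 0 < 1 - 4 * (1 - α) * y * (1 - y) := stmt3_D_pos h0 hy0.le hy1.le
  have hs0 : 0 < s := Real.sqrt_pos.mpr hD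
  have hs2 : s ^ 2 = 1 - 4 * (1 - α) * y * (1 - y) := Real.sq_sqrt hD.le
  have hb : (0:ℝ) < 1 - α := by linarith
  have hDd : HasDerivAt (fun x : ℝ => 1 - 4 * (1 - α) * x * (1 - x))
      (4 * (1 - α) * (2 * y - 1)) y := by
    have h := (((hasDerivAt_id y).const_mul (4 * (1 - α))).mul
      ((hasDerivAt_const y (1:ℝ)).sub (hasDerivAt_id y))).const_sub 1
    exact h.congr_deriv (by simp only [Pi.sub_apply, id_eq]; ring)
  have hsd : HasDerivAt (fun x : ℝ => Real.sqrt (1 - 4 * (1 - α) * x * (1 - x)))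
      (4 * (1 - α) * (2 * y - 1) / (2 * s)) y := hDd.sqrt hD.ne'
  have hN : HasDerivAt (fun x : ℝ => (1 - Real.sqrt (1 - 4 * (1 - α) * x * (1 - x))) ^ 3)
      (3 * (1 - s) ^ 2 * (0 - 4 * (1 - α) * (2 * y - 1) / (2 * s))) y := by
    have h := (((hasDerivAt_const y (1:ℝ)).sub hsd).pow 3)
    exact h.congr_deriv (by simp only [Pi.sub_apply, ← hs_def]; norm_num)
  have hM : HasDerivAt (fun x : ℝ => 8 * (1 - α) ^ 2 * x ^ 2)
      (8 * (1 - α) ^ 2 * (2 * y)) y := by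
    have h := (hasDerivAt_pow 2 y).const_mul (8 * (1 - α) ^ 2)
    exact h.congr_deriv (by norm_num)
  have hM0 : 8 * (1 - α) ^ 2 * y ^ 2 ≠ 0 := by positivity
  have hdiv := hN.div hM hM0
  have heq : g α =ᶠ[nhds y] fun x : ℝ =>
      (1 - Real.sqrt (1 - 4 * (1 - α) * x * (1 - x))) ^ 3 / (8 * (1 - α) ^ 2 * x ^ 2) := by
    filter_upwards [eventually_ne_nhds hy0.ne'] with x hx
    simp [g, hx]
  have hfin := hdiv.congr_of_eventuallyEq heq
  rw [← hs_def] at hfin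
  refine hfin.congr_deriv ?_
  symm
  rw [div_eq_div_iff (by positivity) (by positivity)]
  field_simp
  linear_combination (-16*(1-s)^2) * hs2

set_option maxHeartbeats 1000000 in
theorem stmt3 (α : ℝ) (hα : α ∈ Set.Ico (0 : ℝ) 1) :
    ∃ x0 ∈ Set.Ioc (0 : ℝ) (1 / 2),
      -- x0 is a global maximum of g α on [0,1]
      (∀ x ∈ Set.Icc (0 : ℝ) 1, g α x ≤ g α x0) ∧
      -- x0 is the unique global maximizer on [0,1]
      (∀ y ∈ Set.Icc (0 : ℝ) 1, (∀ x ∈ Set.Icc (0 : ℝ) 1, g α x ≤ g α y) → y = x0) ∧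
      -- x0 is the unique solution in (0,1/2] of G α x = x + 1/2
      (∀ y ∈ Set.Ioc (0 : ℝ) (1 / 2), (G α y = y + 1 / 2 ↔ y = x0)) ∧
      -- if α > 0, x0 is the only critical point of g α in (0,1)
      (0 < α → ∀ y ∈ Set.Ioo (0 : ℝ) 1, (deriv (g α) y = 0 ↔ y = x0)) := by
  obtain ⟨hα0, hα1⟩ := hα
  rcases eq_or_lt_of_le hα0 with h0 | h0
  · -- case α = 0
    subst h0
    refine ⟨1/2, ⟨by norm_num, le_refl _⟩, ?_, ?_, ?_, ?_⟩
    · -- maximum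
      intro x ⟨hx0, hx1⟩
      have hghalf : g 0 (1/2) = 1/2 := by
        have : (1 - 4 * (1 - (0:ℝ)) * (1/2) * (1 - 1/2)) = 0 := by norm_num
        simp [g, this]
        norm_num
      rw [hghalf]
      rcases eq_or_lt_of_le hx0 with h | h
      · simp [g, ← h]
      · have hx : x ≠ 0 := h.ne'
        have hs : Real.sqrt (1 - 4 * (1 - (0:ℝ)) * x * (1 - x)) = |1 - 2*x| := by
          rw [show (1 - 4 * (1 - (0:ℝ)) * x * (1 - x)) = (1 - 2*x)^2 by ring,
            Real.sqrt_sq_eq_abs]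
        rw [g, if_neg hx, hs]
        rcases le_or_gt x (1/2) with h2 | h2
        · rw [abs_of_nonneg (by linarith)]
          rw [div_le_iff₀ (by positivity)]
          nlinarith
        · rw [abs_of_neg (by linarith)]
          rw [div_le_iff₀ (by positivity)]
          nlinarith [sq_nonneg (1 - x)]
    · -- uniqueness of maximizer
      intro y ⟨hy0, hy1⟩ hmax
      have hghalf : g 0 (1/2) = 1/2 := by
        have : (1 - 4 * (1 - (0:ℝ)) * (1/2) * (1 - 1/2)) = 0 := by norm_num
        simp [g, this]
        norm_num
      have hkey := hmax (1/2) (by norm_num)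
      rw [hghalf] at hkey
      by_contra hne
      rcases eq_or_lt_of_le hy0 with h | h
      · rw [← h] at hkey
        simp [g] at hkey
        linarith
      · have hy : y ≠ 0 := h.ne'
        have hs : Real.sqrt (1 - 4 * (1 - (0:ℝ)) * y * (1 - y)) = |1 - 2*y| := by
          rw [show (1 - 4 * (1 - (0:ℝ)) * y * (1 - y)) = (1 - 2*y)^2 by ring,
            Real.sqrt_sq_eq_abs]
        rw [g, if_neg hy, hs] at hkey
        rcases le_or_gt y (1/2) with h2 | h2
        · have h2' : y < 1/2 := lt_of_le_of_ne h2 hne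
          rw [abs_of_nonneg (by linarith)] at hkey
          rw [le_div_iff₀ (by positivity)] at hkey
          nlinarith [mul_pos (mul_pos h h) (show (0:ℝ) < 1/2 - y by linarith)]
        · rw [abs_of_neg (by linarith)] at hkey
          rw [le_div_iff₀ (by positivity)] at hkey
          nlinarith [sq_nonneg (1 - y), mul_pos h (by linarith : (0:ℝ) < y - 1/2)]
    · -- unique solution of G y = y + 1/2
      intro y ⟨hy0, hy2⟩
      have hy : y ≠ 0 := hy0.ne'
      have hs : Real.sqrt (1 - 4 * (1 - (0:ℝ)) * y * (1 - y)) = 1 - 2*y := by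
        rw [show (1 - 4 * (1 - (0:ℝ)) * y * (1 - y)) = (1 - 2*y)^2 by ring,
          Real.sqrt_sq_eq_abs, abs_of_nonneg (by linarith)]
      rw [G, if_neg hy, hs]
      constructor
      · intro h
        rw [div_eq_iff (mul_ne_zero (by norm_num) hy)] at h
        nlinarith
      · intro h
        subst h
        norm_num
    · intro h; exact absurd h (lt_irrefl 0)
  · -- case 0 < α
    have hb0 : (0:ℝ) < 1 - α := by linarith
    have hb1 : 1 - α < 1 := by linarith
    -- Q and its root
    set Qf : ℝ → ℝ := fun x => 4*(1-α)*x^3 + 4*(1-α)*x^2 + (1-α)*x - 8*x + 2 with hQf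
    have hQanti : ∀ t ∈ Set.Icc (0:ℝ) (1/2), ∀ u ∈ Set.Icc (0:ℝ) (1/2), t < u →
        Qf u < Qf t := by
      intro t ⟨ht0, ht2⟩ u ⟨hu0, hu2⟩ htu
      have key : Qf t - Qf u = (u - t) * (8 - (1-α)*(4*(u^2+u*t+t^2) + 4*(u+t) + 1)) := by
        simp only [hQf]; ring
      have hX0 : 0 ≤ 4*(u^2+u*t+t^2) + 4*(u+t) + 1 := by positivity
      have hX8 : 4*(u^2+u*t+t^2) + 4*(u+t) + 1 ≤ 8 := by
        nlinarith [mul_nonneg (by linarith : (0:ℝ) ≤ 1/2 - u) hu0,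
          mul_nonneg (by linarith : (0:ℝ) ≤ 1/2 - t) ht0,
          mul_nonneg (by linarith : (0:ℝ) ≤ 1/2 - u) ht0]
      have hfac : 0 < 8 - (1-α)*(4*(u^2+u*t+t^2) + 4*(u+t) + 1) := by nlinarith
      have hprod := mul_pos (sub_pos.mpr htu) hfac
      linarith [key, hprod]
    have hQcont : ContinuousOn Qf (Set.Icc 0 (1/2)) := by fun_prop
    have hmem : (0:ℝ) ∈ Set.Icc (Qf (1/2)) (Qf 0) := by
      constructor
      · simp only [hQf]; nlinarith
      · simp only [hQf]; norm_num
    obtain ⟨x0, hx0mem, hQx0⟩ := intermediate_value_Icc' (by norm_num) hQcont hmem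
    have hx0pos : 0 < x0 := by
      rcases eq_or_lt_of_le hx0mem.1 with h | h
      · exfalso; rw [← h] at hQx0; simp [hQf] at hQx0
      · exact h
    have hx0half : x0 ≤ 1/2 := hx0mem.2
    have hx0lt1 : x0 < 1 := by linarith
    -- trichotomy for sqrt vs c
    have hcge : ∀ y : ℝ, 0 < y → y ≤ 1/2 → α ≤ 1 - (1-α)*y - 2*(1-α)*y^2 := by
      intro y hy hy2
      nlinarith [mul_pos hb0 hy]
    have hkeyid : ∀ y : ℝ, (1 - (1-α)*y - 2*(1-α)*y^2)^2 - (1 - 4*(1-α)*y*(1-y))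
        = (1-α)*y*(Qf y) := by
      intro y; simp only [hQf]; ring
    have hsq : ∀ y : ℝ, 0 < y → y < 1 →
        (Real.sqrt (1 - 4*(1-α)*y*(1-y)))^2 = 1 - 4*(1-α)*y*(1-y) := by
      intro y hy hy1
      exact Real.sq_sqrt (stmt3_D_pos h0 hy.le hy1.le).le
    have hspos : ∀ y : ℝ, 0 < y → y < 1 → 0 < Real.sqrt (1 - 4*(1-α)*y*(1-y)) := by
      intro y hy hy1
      exact Real.sqrt_pos.mpr (stmt3_D_pos h0 hy.le hy1.le)
    have hlt : ∀ y : ℝ, 0 < y → y < x0 →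
        Real.sqrt (1 - 4*(1-α)*y*(1-y)) < 1 - (1-α)*y - 2*(1-α)*y^2 := by
      intro y hy hyx0
      have hy2 : y ≤ 1/2 := by linarith
      have hQy : 0 < Qf y := by
        have h := hQanti y ⟨hy.le, hy2⟩ x0 ⟨hx0pos.le, hx0half⟩ hyx0
        rw [hQx0] at h
        linarith
      have hc : α ≤ 1 - (1-α)*y - 2*(1-α)*y^2 := hcge y hy hy2
      have h2 := hsq y hy (by linarith)
      have h3 := hkeyid y
      have h4 : 0 < (1-α)*y*(Qf y) := mul_pos (mul_pos hb0 hy) hQy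
      nlinarith [Real.sqrt_nonneg (1 - 4*(1-α)*y*(1-y))]
    have heqx0 : Real.sqrt (1 - 4*(1-α)*x0*(1-x0)) = 1 - (1-α)*x0 - 2*(1-α)*x0^2 := by
      have hc : α ≤ 1 - (1-α)*x0 - 2*(1-α)*x0^2 := hcge x0 hx0pos hx0half
      have h3 := hkeyid x0
      rw [hQx0, mul_zero] at h3
      rw [show 1 - 4*(1-α)*x0*(1-x0) = (1 - (1-α)*x0 - 2*(1-α)*x0^2)^2 by linarith,
        Real.sqrt_sq (by linarith)]
    have hgt : ∀ y : ℝ, x0 < y → y < 1 →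
        1 - (1-α)*y - 2*(1-α)*y^2 < Real.sqrt (1 - 4*(1-α)*y*(1-y)) := by
      intro y hyx0 hy1
      have hy : 0 < y := lt_trans hx0pos hyx0
      have hs0 := hspos y hy hy1
      have h2 := hsq y hy hy1
      have h3 := hkeyid y
      rcases le_or_gt y (1/2) with h4 | h4
      · have hQy : Qf y < 0 := by
          have h := hQanti x0 ⟨hx0pos.le, hx0half⟩ y ⟨hy.le, h4⟩ hyx0
          rw [hQx0] at h
          linarith
        have h5 : (1-α)*y*(Qf y) < 0 :=
          mul_neg_of_pos_of_neg (mul_pos hb0 hy) hQy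
        nlinarith
      · rcases le_or_gt (1 - (1-α)*y - 2*(1-α)*y^2) 0 with h5 | h5
        · linarith
        · have hQy : Qf y < 0 := by
            simp only [hQf]
            nlinarith [mul_pos (mul_pos hb0 hy) hy, mul_pos hb0 hy]
          have h6 : (1-α)*y*(Qf y) < 0 :=
            mul_neg_of_pos_of_neg (mul_pos hb0 hy) hQy
          nlinarith
    -- derivative formula and signs
    have hslt1 : ∀ y : ℝ, 0 < y → y < 1 → Real.sqrt (1 - 4*(1-α)*y*(1-y)) < 1 := by
      intro y hy hy1
      have h2 := hsq y hy hy1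
      have h3 : (1:ℝ) - 4*(1-α)*y*(1-y) < 1 := by nlinarith [mul_pos (mul_pos hb0 hy) (by linarith : (0:ℝ) < 1 - y)]
      nlinarith [Real.sqrt_nonneg (1 - 4*(1-α)*y*(1-y))]
    have hderiv : ∀ y : ℝ, 0 < y → y < 1 → deriv (g α) y =
        (1 - Real.sqrt (1 - 4 * (1 - α) * y * (1 - y))) ^ 2 *
        ((1 - (1-α)*y - 2*(1-α)*y^2) - Real.sqrt (1 - 4 * (1 - α) * y * (1 - y))) /
        (4 * (1-α)^2 * y^3 * Real.sqrt (1 - 4 * (1 - α) * y * (1 - y))) := by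
      intro y hy hy1
      exact (stmt3_hasDerivAt_g h0 hα1 ⟨hy, hy1⟩).deriv
    have hderiv_pos : ∀ y : ℝ, 0 < y → y < x0 → 0 < deriv (g α) y := by
      intro y hy hyx0
      have hy1 : y < 1 := by linarith
      rw [hderiv y hy hy1]
      apply div_pos
      · apply mul_pos
        · exact pow_pos (by linarith [hslt1 y hy hy1]) 2
        · exact sub_pos.mpr (hlt y hy hyx0)
      · exact mul_pos (mul_pos (by positivity) (pow_pos hy 3)) (hspos y hy hy1)
    have hderiv_neg : ∀ y : ℝ, x0 < y → y < 1 → deriv (g α) y < 0 := by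
      intro y hyx0 hy1
      have hy : 0 < y := lt_trans hx0pos hyx0
      rw [hderiv y hy hy1]
      apply div_neg_of_neg_of_pos
      · apply mul_neg_of_pos_of_neg
        · exact pow_pos (by linarith [hslt1 y hy hy1]) 2
        · exact sub_neg.mpr (hgt y hyx0 hy1)
      · exact mul_pos (mul_pos (by positivity) (pow_pos hy 3)) (hspos y hy hy1)
    -- continuity away from 0
    have hcont : ContinuousOn (g α) (Set.Ioi (0:ℝ)) := by
      have hc2 : ContinuousOn (fun x : ℝ =>
          (1 - Real.sqrt (1 - 4*(1-α)*x*(1-x)))^3 / (8*(1-α)^2*x^2)) (Set.Ioi 0) := by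
        apply ContinuousOn.div
        · fun_prop
        · fun_prop
        · intro x hx
          have hx0 : x ≠ 0 := ne_of_gt hx
          positivity
      exact hc2.congr (fun x hx => by simp [g, ne_of_gt (show (0:ℝ) < x from hx)])
    -- monotonicity
    have hmono : ∀ x : ℝ, 0 < x → x < x0 → g α x < g α x0 := by
      intro x hx hxx0
      have hsm : StrictMonoOn (g α) (Set.Icc x x0) := by
        apply strictMonoOn_of_deriv_pos (convex_Icc x x0)
        · exact hcont.mono (fun z hz => lt_of_lt_of_le hx hz.1)
        · intro z hz
          rw [interior_Icc] at hz
          exact hderiv_pos z (lt_trans hx hz.1) hz.2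
      exact hsm ⟨le_refl x, hxx0.le⟩ ⟨hxx0.le, le_refl x0⟩ hxx0
    have hanti : ∀ x : ℝ, x0 < x → x ≤ 1 → g α x < g α x0 := by
      intro x hxx0 hx1
      have hsm : StrictAntiOn (g α) (Set.Icc x0 x) := by
        apply strictAntiOn_of_deriv_neg (convex_Icc x0 x)
        · exact hcont.mono (fun z hz => lt_of_lt_of_le hx0pos hz.1)
        · intro z hz
          rw [interior_Icc] at hz
          exact hderiv_neg z hz.1 (lt_of_lt_of_le hz.2 hx1)
      exact hsm ⟨le_refl x0, hxx0.le⟩ ⟨hxx0.le, le_refl x⟩ hxx0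
    have hg0 : g α 0 = 0 := by simp [g]
    have hgx0pos : 0 < g α x0 := by
      rw [g, if_neg hx0pos.ne']
      have h1 := hslt1 x0 hx0pos hx0lt1
      have h2 : (0:ℝ) < 1 - Real.sqrt (1 - 4*(1-α)*x0*(1-x0)) := by linarith
      positivity
    refine ⟨x0, ⟨hx0pos, hx0half⟩, ?_, ?_, ?_, ?_⟩
    · -- maximum
      intro x ⟨hx0', hx1⟩
      rcases eq_or_lt_of_le hx0' with h | h
      · rw [← h, hg0]; exact hgx0pos.le
      · rcases lt_trichotomy x x0 with h2 | h2 | h2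
        · exact (hmono x h h2).le
        · rw [h2]
        · exact (hanti x h2 hx1).le
    · -- uniqueness
      intro y ⟨hy0, hy1⟩ hmax
      have hkey := hmax x0 ⟨hx0pos.le, by linarith⟩
      by_contra hne
      rcases eq_or_lt_of_le hy0 with h | h
      · rw [← h, hg0] at hkey; linarith
      · rcases lt_trichotomy y x0 with h2 | h2 | h2
        · linarith [hmono y h h2]
        · exact hne h2
        · linarith [hanti y h2 hy1]
    · -- unique solution of G y = y + 1/2
      intro y ⟨hy0, hy2⟩
      have hy : y ≠ 0 := hy0.ne'
      have hy1 : y < 1 := by linarith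
      rw [G, if_neg hy]
      constructor
      · intro h
        have h2 : 1 - Real.sqrt (1 - 4*(1-α)*y*(1-y)) = 2*(1-α)*y*(y + 1/2) := by
          rw [div_eq_iff (mul_ne_zero (by positivity) hy)] at h
          linarith [h]
        have h3 : Real.sqrt (1 - 4*(1-α)*y*(1-y)) = 1 - (1-α)*y - 2*(1-α)*y^2 := by
          nlinarith [h2]
        rcases lt_trichotomy y x0 with h4 | h4 | h4
        · exfalso; linarith [hlt y hy0 h4]
        · exact h4
        · exfalso; linarith [hgt y h4 hy1]
      · intro h
        subst h
        rw [heqx0]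
        rw [div_eq_iff (mul_ne_zero (by positivity) hx0pos.ne')]
        ring
    · -- critical points
      intro _ y ⟨hy0, hy1⟩
      rw [hderiv y hy0 hy1]
      have hs0 := hspos y hy0 hy1
      have hs1 := hslt1 y hy0 hy1
      constructor
      · intro h
        rcases lt_trichotomy y x0 with h2 | h2 | h2
        · exfalso
          have := hlt y hy0 h2
          have hpos : 0 < (1 - Real.sqrt (1 - 4 * (1 - α) * y * (1 - y))) ^ 2 *
              ((1 - (1-α)*y - 2*(1-α)*y^2) - Real.sqrt (1 - 4 * (1 - α) * y * (1 - y))) /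
              (4 * (1-α)^2 * y^3 * Real.sqrt (1 - 4 * (1 - α) * y * (1 - y))) := by
            apply div_pos
            · exact mul_pos (pow_pos (by linarith) 2) (by linarith)
            · exact mul_pos (mul_pos (by positivity) (pow_pos hy0 3)) hs0
          linarith [hpos, h]
        · exact h2
        · exfalso
          have := hgt y h2 hy1
          have hneg : (1 - Real.sqrt (1 - 4 * (1 - α) * y * (1 - y))) ^ 2 *
              ((1 - (1-α)*y - 2*(1-α)*y^2) - Real.sqrt (1 - 4 * (1 - α) * y * (1 - y))) /
              (4 * (1-α)^2 * y^3 * Real.sqrt (1 - 4 * (1 - α) * y * (1 - y))) < 0 := by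
            apply div_neg_of_neg_of_pos
            · exact mul_neg_of_pos_of_neg (pow_pos (by linarith) 2) (by linarith)
            · exact mul_pos (mul_pos (by positivity) (pow_pos hy0 3)) hs0
          linarith [hneg, h]
      · intro h
        subst h
        rw [heqx0]
        simp
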